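/- Let F be a nice graph: strictly 1-balanced, 3-connected, and not transformable into an isomorphic graph by adding one edge and then deleting one edge. Let H_F be an F-graph whose underlying multi-hypergraph contains no avoidable configuration. Then every copy of F contained in the union graph G(H_F) is already an F-edge of H_F. -/

import Mathlib

/-- `E` is (the edge set of) a copy of the graph `F` on the vertex type `V`: the image of
the edges of `F` under an injection of the vertices. -/
def IsCopy {α V : Type*} (F : SimpleGraph α) (E : Finset (Sym2 V)) : Prop :=
  ∃ φ : α ↪ V, (↑E : Set (Sym2 V)) = Sym2.map φ '' F.edgeSet

/-- The set of vertices spanned by a finite set of graph edges. -/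
def vertsOf {V : Type*} [DecidableEq V] (E : Finset (Sym2 V)) : Finset V :=
  E.sup fun e => Sym2.lift ⟨fun a b => ({a, b} : Finset V), fun a b => Finset.pair_comm a b⟩ e

/-- `F` is 2-connected: at least 3 vertices and removing any single vertex leaves a
connected graph. -/
def TwoConnected {α : Type*} [Fintype α] (F : SimpleGraph α) : Prop :=
  3 ≤ Fintype.card α ∧ ∀ v : α, (F.induce ({v}ᶜ : Set α)).Connected

/-- The 1-density `d₁(F) = e(F)/(|F|-1)`. -/
noncomputable def oneDensity {α : Type*} [Fintype α] (F : SimpleGraph α) : ℚ :=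
  (F.edgeSet.ncard : ℚ) / ((Fintype.card α : ℚ) - 1)

/-- `F` is strictly 1-balanced: every proper subgraph with at least two vertices has
strictly smaller 1-density. -/
def StrictlyOneBalanced {α : Type*} [Fintype α] (F : SimpleGraph α) : Prop :=
  ∀ H : F.Subgraph, H ≠ ⊤ → 2 ≤ H.verts.ncard →
    (H.edgeSet.ncard : ℚ) / ((H.verts.ncard : ℚ) - 1) < oneDensity F

/-- `F` is 3-connected: at least 4 vertices and removing any (at most two) vertices leaves
a connected graph. -/
def ThreeConnected {α : Type*} [Fintype α] (F : SimpleGraph α) : Prop :=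
  4 ≤ Fintype.card α ∧ ∀ u v : α, (F.induce ({u, v}ᶜ : Set α)).Connected

/-- `F` cannot be transformed into an isomorphic graph by adding one (non-loop, absent)
edge and then deleting a different edge. -/
def AddDeleteRigid {α : Type*} (F : SimpleGraph α) : Prop :=
  ∀ e : Sym2 α, ¬ e.IsDiag → e ∉ F.edgeSet → ∀ e' ∈ insert e F.edgeSet, e' ≠ e →
    ¬ Nonempty ((SimpleGraph.fromEdgeSet (insert e F.edgeSet \ {e'})) ≃g F)

/-- `F` is nice: strictly 1-balanced, 3-connected, and not transformable into an
isomorphic graph by adding one edge and deleting another. -/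
def Nice {α : Type*} [Fintype α] (F : SimpleGraph α) : Prop :=
  StrictlyOneBalanced F ∧ ThreeConnected F ∧ AddDeleteRigid F

/-- Connectivity of a configuration of hyperedges (each hyperedge being the vertex set of
a copy, i.e. `vertsOf E`). -/
def ConfigConnected {V : Type*} [DecidableEq V] (𝒮 : Finset (Finset (Sym2 V))) : Prop :=
  ∀ u ∈ 𝒮.sup vertsOf, ∀ v ∈ 𝒮.sup vertsOf,
    Relation.ReflTransGen (fun x y => ∃ E ∈ 𝒮, x ∈ vertsOf E ∧ y ∈ vertsOf E) u v

/-- The multi-hypergraph underlying the `F`-graph `𝓕` contains no avoidable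
configuration. -/
def NoAvoidableConfig {V : Type*} [DecidableEq V] (r : ℕ)
    (𝓕 : Finset (Finset (Sym2 V))) : Prop :=
  ¬ ∃ 𝒮 ⊆ 𝓕, 𝒮.Nonempty ∧ ConfigConnected 𝒮 ∧ 𝒮.card ≤ 2 * r.choose 2 ∧
      2 ≤ ((r : ℤ) - 1) * 𝒮.card + 1 - (𝒮.sup vertsOf).card

/-! ### Auxiliary lemmas -/

lemma sym2_cases {γ : Type*} (z : Sym2 γ) : ∃ a b : γ, z = s(a, b) :=
  Sym2.inductionOn z fun a b => ⟨a, b, rfl⟩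

lemma mem_vertsOf {V : Type*} [DecidableEq V] {E : Finset (Sym2 V)} {a : V} :
    a ∈ vertsOf E ↔ ∃ e ∈ E, a ∈ e := by
  unfold vertsOf
  rw [Finset.mem_sup]
  constructor
  · rintro ⟨e, he, ha⟩
    obtain ⟨x, y, rfl⟩ := sym2_cases e
    refine ⟨s(x, y), he, ?_⟩
    simp only [Sym2.lift_mk, Finset.mem_insert, Finset.mem_singleton] at ha
    rw [Sym2.mem_iff]; exact ha
  · rintro ⟨e, he, ha⟩
    obtain ⟨x, y, rfl⟩ := sym2_cases e
    refine ⟨s(x, y), he, ?_⟩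
    simp only [Sym2.lift_mk, Finset.mem_insert, Finset.mem_singleton]
    rw [Sym2.mem_iff] at ha; exact ha

lemma card_filter_comm {A B : Type*} (s : Finset A) (t : Finset B) (p : A → B → Prop)
    [∀ a b, Decidable (p a b)] :
    ∑ x ∈ s, (t.filter (fun y => p x y)).card = ∑ y ∈ t, (s.filter (fun x => p x y)).card := by
  simp only [Finset.card_filter]
  exact Finset.sum_comm

lemma compl_nonempty {α : Type*} [Fintype α] [DecidableEq α] {s : Finset α}
    (h : s.card < Fintype.card α) : ∃ w, w ∉ s := by
  have : sᶜ.Nonempty := by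
    rw [← Finset.card_pos, Finset.card_compl]; omega
  obtain ⟨w, hw⟩ := this
  exact ⟨w, Finset.mem_compl.mp hw⟩

lemma preconn {α : Type*} [Fintype α] {F : SimpleGraph α} (h3 : ThreeConnected F) :
    F.Preconnected := by
  intro a b
  by_cases hab : a = b
  · subst hab; rfl
  classical
  have hcard : ({a, b} : Finset α).card < Fintype.card α := by
    calc ({a, b} : Finset α).card ≤ 2 := Finset.card_le_two
    _ < 4 := by norm_num
    _ ≤ Fintype.card α := h3.1
  obtain ⟨w, hw⟩ := compl_nonempty hcard
  simp only [Finset.mem_insert, Finset.mem_singleton, not_or] at hw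
  have hmem : ∀ x ∈ ({a, b} : Finset α), x ∈ ({w, w}ᶜ : Set α) := by
    intro x hx
    simp only [Set.mem_compl_iff, Set.mem_insert_iff, Set.mem_singleton_iff, or_self]
    rintro rfl
    simp only [Finset.mem_insert, Finset.mem_singleton] at hx
    rcases hx with rfl | rfl
    · exact hw.1 rfl
    · exact hw.2 rfl
  have hconn := h3.2 w w
  have hreach := hconn.preconnected ⟨a, hmem a (by simp)⟩ ⟨b, hmem b (by simp)⟩
  have := hreach.map (SimpleGraph.Embedding.induce ({w, w}ᶜ : Set α)).toHom
  simpa using this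

lemma first_step {α : Type*} {F : SimpleGraph α} {s : Set α} {x y : s}
    (h : (F.induce s).Reachable x y) (hxy : x ≠ y) : ∃ z : s, F.Adj ↑x ↑z := by
  obtain ⟨w⟩ := h
  cases w with
  | nil => exact absurd rfl hxy
  | cons h p => exact ⟨_, h⟩

lemma deg3 {α : Type*} [Fintype α] [DecidableEq α] {F : SimpleGraph α}
    [DecidableRel F.Adj] (h3 : ThreeConnected F) (a : α) : 3 ≤ F.degree a := by
  by_contra hlt
  push_neg at hlt
  have hN : (F.neighborFinset a).card ≤ 2 := by
    rw [← SimpleGraph.card_neighborFinset_eq_degree] at hlt; omega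
  have hexists : ∃ u v : α, (F.neighborFinset a : Set α) ⊆ {u, v} ∧ a ≠ u ∧ a ≠ v := by
    have haN : a ∉ F.neighborFinset a := by simp
    interval_cases h : (F.neighborFinset a).card
    · obtain ⟨u, hu⟩ := compl_nonempty (s := {a}) (by
        have := h3.1; have := Finset.card_singleton a; omega)
      simp only [Finset.mem_singleton] at hu
      refine ⟨u, u, ?_, fun h => hu h.symm, fun h => hu h.symm⟩
      rw [Finset.card_eq_zero.mp h]; simp
    · obtain ⟨x, hx⟩ := Finset.card_eq_one.mp h
      refine ⟨x, x, by rw [hx]; simp, ?_, ?_⟩ <;>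
        (rintro rfl; rw [hx] at haN; simp at haN)
    · obtain ⟨x, y, hxy, hx⟩ := Finset.card_eq_two.mp h
      refine ⟨x, y, by rw [hx]; simp, ?_, ?_⟩ <;>
        (rintro rfl; rw [hx] at haN; simp at haN)
  obtain ⟨u, v, hsub, hau, hav⟩ := hexists
  obtain ⟨b, hb⟩ := compl_nonempty (s := {u, v, a}) (by
    have h1 : ({u, v, a} : Finset α).card ≤ 3 := Finset.card_le_three
    have := h3.1; omega)
  simp only [Finset.mem_insert, Finset.mem_singleton, not_or] at hb
  have hamem : a ∈ ({u, v}ᶜ : Set α) := by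
    simp only [Set.mem_compl_iff, Set.mem_insert_iff, Set.mem_singleton_iff, not_or]
    exact ⟨hau, hav⟩
  have hbmem : b ∈ ({u, v}ᶜ : Set α) := by
    simp only [Set.mem_compl_iff, Set.mem_insert_iff, Set.mem_singleton_iff, not_or]
    exact ⟨hb.1, hb.2.1⟩
  have hreach := (h3.2 u v).preconnected ⟨a, hamem⟩ ⟨b, hbmem⟩
  obtain ⟨z, hz⟩ := first_step hreach (by
    intro h; apply hb.2.2; exact (congrArg Subtype.val h).symm)
  have hzN : (z : α) ∈ F.neighborFinset a := by simpa using hz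
  have := hsub hzN
  have hzs := z.2
  simp only [Set.mem_compl_iff] at hzs
  exact hzs this

lemma walk_stays {α : Type*} {F : SimpleGraph α} {s : Set α} (P : Set α)
    (hcl : ∀ x ∈ s, x ∈ P → ∀ y ∈ s, F.Adj x y → y ∈ P) :
    ∀ {x y : s}, (F.induce s).Walk x y → (x : α) ∈ P → (y : α) ∈ P := by
  intro x y w
  induction w with
  | nil => exact id
  | cons h p ih =>
    intro hx
    rename_i u z _
    exact ih (hcl u u.2 hx z z.2 h)

lemma sep_lemma {α : Type*} [Fintype α] [DecidableEq α] {F : SimpleGraph α}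
    (h3 : ThreeConnected F) (W P : Finset α) (hPsub : P ⊆ W)
    (hW : W ≠ Finset.univ) (hW2 : 2 ≤ W.card) (hP : P.Nonempty)
    (hcl : ∀ a ∈ P, ∀ b, F.Adj a b → b ∈ W) (hS : (W \ P).card ≤ 2) : False := by
  obtain ⟨p₀, hp₀⟩ := hP
  have hQ : ∃ q, q ∉ W := by
    by_contra h
    push_neg at h
    exact hW (Finset.eq_univ_of_forall h)
  obtain ⟨q₀, hq₀⟩ := hQ
  have hexists : ∃ u v : α, ((W \ P : Finset α) : Set α) ⊆ {u, v} ∧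
      (∃ p ∈ P, p ≠ u ∧ p ≠ v) ∧ q₀ ≠ u ∧ q₀ ≠ v := by
    interval_cases h : (W \ P).card
    · have hWP : W = P := by
        apply Finset.Subset.antisymm _ hPsub
        intro x hx
        by_contra hxP
        have : x ∈ W \ P := Finset.mem_sdiff.mpr ⟨hx, hxP⟩
        rw [Finset.card_eq_zero.mp h] at this
        simp at this
      obtain ⟨p₁, hp₁W, hp₁⟩ := Finset.exists_mem_ne (s := P)
        (by rw [← hWP]; omega) p₀
      refine ⟨p₁, p₁, by rw [Finset.card_eq_zero.mp h]; simp, ⟨p₀, hp₀, ?_, ?_⟩, ?_, ?_⟩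
      · exact fun hh => hp₁ hh.symm
      · exact fun hh => hp₁ hh.symm
      · rintro rfl; exact hq₀ (hPsub hp₁W)
      · rintro rfl; exact hq₀ (hPsub hp₁W)
    · obtain ⟨x, hx⟩ := Finset.card_eq_one.mp h
      have hxW : x ∈ W \ P := by rw [hx]; simp
      refine ⟨x, x, by rw [hx]; simp, ⟨p₀, hp₀, ?_, ?_⟩, ?_, ?_⟩ <;>
        (rintro rfl)
      · exact (Finset.mem_sdiff.mp hxW).2 hp₀
      · exact (Finset.mem_sdiff.mp hxW).2 hp₀
      · exact hq₀ (Finset.mem_sdiff.mp hxW).1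
      · exact hq₀ (Finset.mem_sdiff.mp hxW).1
    · obtain ⟨x, y, hxy, hx⟩ := Finset.card_eq_two.mp h
      have hxW : x ∈ W \ P := by rw [hx]; simp
      have hyW : y ∈ W \ P := by rw [hx]; simp
      refine ⟨x, y, by rw [hx]; simp, ⟨p₀, hp₀, ?_, ?_⟩, ?_, ?_⟩ <;> (rintro rfl)
      · exact (Finset.mem_sdiff.mp hxW).2 hp₀
      · exact (Finset.mem_sdiff.mp hyW).2 hp₀
      · exact hq₀ (Finset.mem_sdiff.mp hxW).1
      · exact hq₀ (Finset.mem_sdiff.mp hyW).1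
  obtain ⟨u, v, hcover, ⟨p₁, hp₁, hp₁u, hp₁v⟩, hq₀u, hq₀v⟩ := hexists
  set s : Set α := ({u, v}ᶜ : Set α) with hs
  have hp₁s : p₁ ∈ s := by
    simp only [hs, Set.mem_compl_iff, Set.mem_insert_iff, Set.mem_singleton_iff, not_or]
    exact ⟨hp₁u, hp₁v⟩
  have hq₀s : q₀ ∈ s := by
    simp only [hs, Set.mem_compl_iff, Set.mem_insert_iff, Set.mem_singleton_iff, not_or]
    exact ⟨hq₀u, hq₀v⟩
  have hreach := (h3.2 u v).preconnected ⟨p₁, hp₁s⟩ ⟨q₀, hq₀s⟩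
  obtain ⟨w⟩ := hreach
  have hcl' : ∀ x ∈ s, x ∈ (P : Set α) → ∀ y ∈ s, F.Adj x y → y ∈ (P : Set α) := by
    intro x hxs hxP y hys hadj
    have hyW : y ∈ W := hcl x hxP y hadj
    by_contra hyP
    have : y ∈ W \ P := Finset.mem_sdiff.mpr ⟨hyW, hyP⟩
    have := hcover this
    simp only [hs, Set.mem_compl_iff] at hys
    exact hys this
  have : (q₀ : α) ∈ (P : Set α) := walk_stays (F := F) (s := s) (P := P) hcl' w hp₁
  exact hq₀ (hPsub this)

lemma bal_int {α : Type*} [Fintype α] {F : SimpleGraph α} (hb : StrictlyOneBalanced F)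
    (H : F.Subgraph) (hne : H ≠ ⊤) (hv : 2 ≤ H.verts.ncard) :
    H.edgeSet.ncard * (Fintype.card α - 1) + 1 ≤ F.edgeSet.ncard * (H.verts.ncard - 1) := by
  have hrv : H.verts.ncard ≤ Fintype.card α := by
    have := Set.ncard_le_ncard (Set.subset_univ H.verts) (Set.finite_univ)
    rwa [Set.ncard_univ, Nat.card_eq_fintype_card] at this
  have hr : 2 ≤ Fintype.card α := le_trans hv hrv
  have h := hb H hne hv
  unfold oneDensity at h
  set e := H.edgeSet.ncard
  set v := H.verts.ncard
  set f := F.edgeSet.ncard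
  set r := Fintype.card α
  have hv1 : (0:ℚ) < (v:ℚ) - 1 := by
    have : (2:ℚ) ≤ (v:ℚ) := by exact_mod_cast hv
    linarith
  have hr1 : (0:ℚ) < (r:ℚ) - 1 := by
    have : (2:ℚ) ≤ (r:ℚ) := by exact_mod_cast hr
    linarith
  rw [div_lt_div_iff₀ hv1 hr1] at h
  have h2 : (e:ℚ) * ((r:ℚ) - 1) < (f:ℚ) * ((v:ℚ) - 1) := h
  have hcast : ((e * (r-1) : ℕ) : ℚ) < ((f * (v-1) : ℕ) : ℚ) := by
    push_cast [Nat.cast_sub (by omega : 1 ≤ r), Nat.cast_sub (by omega : 1 ≤ v)]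
    convert h2 using 2
  exact_mod_cast hcast

lemma sym2_eq_pair {γ : Type*} {ε : Sym2 γ} (hd : ¬ε.IsDiag) {x y : γ}
    (h : ∀ a ∈ ε, a = x ∨ a = y) : ε = s(x, y) := by
  obtain ⟨a, b, rfl⟩ := sym2_cases ε
  have hab : a ≠ b := by rwa [Sym2.mk_isDiag_iff] at hd
  rcases h a (Sym2.mem_mk_left a b) with rfl | rfl <;>
    rcases h b (Sym2.mem_mk_right a b) with rfl | rfl
  · exact absurd rfl hab
  · rfl
  · exact Sym2.eq_swap
  · exact absurd rfl hab

section copies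
variable {α V : Type*} [Fintype α] [DecidableEq V] {F : SimpleGraph α}
  {φ : α ↪ V} {E : Finset (Sym2 V)}

omit [Fintype α] [DecidableEq V] in
lemma copy_card (hE : (↑E : Set (Sym2 V)) = Sym2.map ⇑φ '' F.edgeSet) :
    E.card = F.edgeSet.ncard := by
  have : (↑E : Set (Sym2 V)).ncard = F.edgeSet.ncard := by
    rw [hE]
    exact Set.ncard_image_of_injective _ (Sym2.map.injective φ.injective)
  rwa [Set.ncard_coe_finset] at this

omit [Fintype α] [DecidableEq V] in
lemma copy_mem_of_edge (hE : (↑E : Set (Sym2 V)) = Sym2.map ⇑φ '' F.edgeSet)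
    {ε : Sym2 α} (hε : ε ∈ F.edgeSet) : Sym2.map ⇑φ ε ∈ E := by
  have : Sym2.map ⇑φ ε ∈ (↑E : Set (Sym2 V)) := hE ▸ ⟨ε, hε, rfl⟩
  exact_mod_cast this

omit [Fintype α] [DecidableEq V] in
lemma copy_edge_structure (hE : (↑E : Set (Sym2 V)) = Sym2.map ⇑φ '' F.edgeSet)
    {e : Sym2 V} (he : e ∈ E) : ∃ ε ∈ F.edgeSet, Sym2.map ⇑φ ε = e := by
  have : e ∈ (↑E : Set (Sym2 V)) := he
  rw [hE] at this
  obtain ⟨ε, h1, h2⟩ := this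
  exact ⟨ε, h1, h2⟩

omit [Fintype α] [DecidableEq V] in
lemma copy_nondiag (hE : (↑E : Set (Sym2 V)) = Sym2.map ⇑φ '' F.edgeSet)
    {e : Sym2 V} (he : e ∈ E) : ¬ e.IsDiag := by
  obtain ⟨ε, h1, rfl⟩ := copy_edge_structure hE he
  rw [Sym2.isDiag_map φ.injective]
  exact F.not_isDiag_of_mem_edgeSet h1

lemma copy_verts (hdeg : ∀ a : α, ∃ b, F.Adj a b)
    (hE : (↑E : Set (Sym2 V)) = Sym2.map ⇑φ '' F.edgeSet) :
    vertsOf E = Finset.univ.image (fun a => φ a) := by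
  ext x
  rw [mem_vertsOf, Finset.mem_image]
  constructor
  · rintro ⟨e, he, hx⟩
    obtain ⟨ε, -, rfl⟩ := copy_edge_structure hE he
    obtain ⟨a, -, rfl⟩ := Sym2.mem_map.mp hx
    exact ⟨a, Finset.mem_univ a, rfl⟩
  · rintro ⟨a, -, rfl⟩
    obtain ⟨b, hb⟩ := hdeg a
    refine ⟨Sym2.map ⇑φ s(a, b), copy_mem_of_edge hE hb, ?_⟩
    exact Sym2.mem_map.mpr ⟨a, Sym2.mem_mk_left a b, rfl⟩

lemma copy_verts_card (hdeg : ∀ a : α, ∃ b, F.Adj a b)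
    (hE : (↑E : Set (Sym2 V)) = Sym2.map ⇑φ '' F.edgeSet) :
    (vertsOf E).card = Fintype.card α := by
  rw [copy_verts hdeg hE, Finset.card_image_of_injective _ φ.injective, Finset.card_univ]

omit [Fintype α] in
lemma copy_endpoint {e : Sym2 V} (he : e ∈ E) {x : V} (hx : x ∈ e) : x ∈ vertsOf E :=
  mem_vertsOf.mpr ⟨e, he, hx⟩

end copies

/-- if `F` is nice and `𝓕` is an `F`-graph whose underlying
multi-hypergraph contains no avoidable configuration, then every copy of `F` contained in
the union graph of `𝓕` is already an `F`-edge of `𝓕`. -/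
theorem stmt_15 {α V : Type*} [Fintype α] [DecidableEq V]
    (F : SimpleGraph α) (hF : Nice F)
    (𝓕 : Finset (Finset (Sym2 V))) (hcopies : ∀ E ∈ 𝓕, IsCopy F E)
    (hav : NoAvoidableConfig (Fintype.card α) 𝓕) :
    ∀ E₀ : Finset (Sym2 V), IsCopy F E₀ → (∀ e ∈ E₀, ∃ E ∈ 𝓕, e ∈ E) → E₀ ∈ 𝓕 := by
  classical
  obtain ⟨hbal, h3, hrig⟩ := hF
  intro E₀ hcopy₀ hcover
  by_contra hE₀F
  obtain ⟨φ₀, hφ₀⟩ := hcopy₀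
  set r := Fintype.card α with hr_def
  set f := F.edgeSet.ncard with hf_def
  have hr4 : 4 ≤ r := h3.1
  have hdegF : ∀ a : α, ∃ b, F.Adj a b := by
    intro a
    have h3d := deg3 h3 a
    have : 0 < (F.neighborFinset a).card := by
      rw [SimpleGraph.card_neighborFinset_eq_degree]; omega
    obtain ⟨b, hb⟩ := Finset.card_pos.mp this
    exact ⟨b, by simpa using hb⟩
  have hf_finset : f = F.edgeSet.toFinset.card := by
    rw [hf_def, Set.ncard_eq_toFinset_card']
  haveI : Nonempty α := Fintype.card_pos_iff.mp (by omega)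
  have hf1 : 1 ≤ f := by
    obtain ⟨b, hb⟩ := hdegF (Classical.arbitrary α)
    rw [hf_finset]
    exact Finset.card_pos.mpr ⟨s(_, b), Set.mem_toFinset.mpr hb⟩
  have h2f3r : 3 * r ≤ 2 * f := by
    have hhs := F.sum_degrees_eq_twice_card_edges
    have hdeg : ∀ a : α, 3 ≤ F.degree a := deg3 h3
    have h1 : 3 * r ≤ ∑ a : α, F.degree a := by
      calc 3 * r = ∑ _a : α, 3 := by rw [Finset.sum_const, Finset.card_univ]; ring
      _ ≤ ∑ a : α, F.degree a := Finset.sum_le_sum fun a _ => hdeg a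
    have h2 : F.edgeFinset.card = f := by
      rw [hf_finset]; rfl
    omega
  -- choice of a covering copy for each edge of E₀
  have hgex : ∀ e : Sym2 V, ∃ E : Finset (Sym2 V), e ∈ E₀ → (E ∈ 𝓕 ∧ e ∈ E) := by
    intro e
    by_cases he : e ∈ E₀
    · obtain ⟨E, hE1, hE2⟩ := hcover e he
      exact ⟨E, fun _ => ⟨hE1, hE2⟩⟩
    · exact ⟨∅, fun h => absurd h he⟩
  choose g hg using hgex
  set 𝒮 : Finset (Finset (Sym2 V)) := E₀.image g with h𝒮_def
  set m := 𝒮.card with hm_def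
  have hSsub : 𝒮 ⊆ 𝓕 := by
    intro E hE
    obtain ⟨e, he, rfl⟩ := Finset.mem_image.mp hE
    exact (hg e he).1
  have hE₀card : E₀.card = f := copy_card hφ₀
  have hE₀ne : E₀.Nonempty := by
    rw [← Finset.card_pos, hE₀card]; omega
  have hSne : 𝒮.Nonempty := hE₀ne.image g
  have hmf : m ≤ f := by
    rw [hm_def, h𝒮_def, ← hE₀card]
    exact Finset.card_image_le
  have hm1 : 1 ≤ m := Finset.card_pos.mpr hSne
  -- basic data for members of 𝒮
  have hcopyE : ∀ E ∈ 𝒮, ∃ ψ : α ↪ V, (↑E : Set (Sym2 V)) = Sym2.map ⇑ψ '' F.edgeSet :=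
    fun E hE => hcopies E (hSsub hE)
  have hcardE : ∀ E ∈ 𝒮, E.card = f := by
    intro E hE
    obtain ⟨ψ, hψ⟩ := hcopyE E hE
    exact copy_card hψ
  have hvertscard : ∀ E ∈ 𝒮, (vertsOf E).card = r := by
    intro E hE
    obtain ⟨ψ, hψ⟩ := hcopyE E hE
    exact copy_verts_card hdegF hψ
  set V₀ : Finset V := vertsOf E₀ with hV₀_def
  have hV₀img : V₀ = Finset.univ.image (fun a => φ₀ a) := copy_verts hdegF hφ₀
  have hV₀card : V₀.card = r := copy_verts_card hdegF hφ₀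
  set w : Finset (Sym2 V) → Finset α :=
    fun E => Finset.univ.filter (fun a => φ₀ a ∈ vertsOf E) with hw_def
  set v : Finset (Sym2 V) → ℕ := fun E => (w E).card with hv_def
  set T : Finset (Sym2 V) → Finset (Sym2 α) :=
    fun E => F.edgeSet.toFinset.filter (fun ε => Sym2.map ⇑φ₀ ε ∈ E) with hT_def
  -- membership in E₀'s copies
  have hmapE₀ : ∀ ε ∈ F.edgeSet, Sym2.map ⇑φ₀ ε ∈ E₀ := fun ε hε => copy_mem_of_edge hφ₀ hε
  have hgS : ∀ ε ∈ F.edgeSet, g (Sym2.map ⇑φ₀ ε) ∈ 𝒮 := by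
    intro ε hε
    exact Finset.mem_image.mpr ⟨_, hmapE₀ ε hε, rfl⟩
  have hεw : ∀ ε ∈ F.edgeSet, ∀ a ∈ ε, a ∈ w (g (Sym2.map ⇑φ₀ ε)) := by
    intro ε hε a ha
    have hmem : Sym2.map ⇑φ₀ ε ∈ g (Sym2.map ⇑φ₀ ε) := (hg _ (hmapE₀ ε hε)).2
    have : φ₀ a ∈ Sym2.map ⇑φ₀ ε := Sym2.mem_map.mpr ⟨a, ha, rfl⟩
    rw [hw_def]
    exact Finset.mem_filter.mpr ⟨Finset.mem_univ a, copy_endpoint hmem this⟩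
  have hTw : ∀ E, ∀ ε ∈ T E, ∀ a ∈ ε, a ∈ w E := by
    intro E ε hε a ha
    rw [hT_def] at hε
    obtain ⟨h1, h2⟩ := Finset.mem_filter.mp hε
    have : φ₀ a ∈ Sym2.map ⇑φ₀ ε := Sym2.mem_map.mpr ⟨a, ha, rfl⟩
    rw [hw_def]
    exact Finset.mem_filter.mpr ⟨Finset.mem_univ a, copy_endpoint h2 this⟩
  have hT1 : ∀ E ∈ 𝒮, 1 ≤ (T E).card := by
    intro E hE
    obtain ⟨e, he, rfl⟩ := Finset.mem_image.mp hE
    obtain ⟨ε, hε, hmap⟩ := copy_edge_structure hφ₀ he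
    refine Finset.card_pos.mpr ⟨ε, ?_⟩
    rw [hT_def]
    exact Finset.mem_filter.mpr ⟨Set.mem_toFinset.mpr hε, by rw [hmap]; exact (hg e he).2⟩
  have hv2 : ∀ E ∈ 𝒮, 2 ≤ v E := by
    intro E hE
    have := hT1 E hE
    obtain ⟨ε, hε⟩ := Finset.card_pos.mp this
    have hεe : ε ∈ F.edgeSet := by
      rw [hT_def] at hε
      exact Set.mem_toFinset.mp (Finset.mem_filter.mp hε).1
    obtain ⟨a, b, rfl⟩ := sym2_cases ε
    have hab : a ≠ b := (F.mem_edgeSet.mp hεe).ne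
    rw [hv_def]
    exact Finset.one_lt_card.mpr ⟨a, hTw E _ hε a (Sym2.mem_mk_left a b), b,
      hTw E _ hε b (Sym2.mem_mk_right a b), hab⟩
  -- every proper "trace" subgraph bound
  have hbalE : ∀ E ∈ 𝒮, (T E).card * (r - 1) + 1 ≤ f * (v E - 1) := by
    intro E hE
    set H : F.Subgraph :=
      { verts := {a : α | φ₀ a ∈ vertsOf E}
        Adj := fun a b => F.Adj a b ∧ Sym2.map ⇑φ₀ s(a, b) ∈ E
        adj_sub := fun h => h.1
        edge_vert := by
          intro a b h
          have : φ₀ a ∈ Sym2.map ⇑φ₀ s(a, b) :=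
            Sym2.mem_map.mpr ⟨a, Sym2.mem_mk_left a b, rfl⟩
          exact copy_endpoint h.2 this
        symm := ⟨by
          intro a b h
          refine ⟨h.1.symm, ?_⟩
          rw [Sym2.eq_swap]
          exact h.2⟩ }
      with hH_def
    have hverts : H.verts = (↑(w E) : Set α) := by
      rw [hH_def, hw_def]
      ext a
      simp
    have hverts_ncard : H.verts.ncard = v E := by
      rw [hverts, Set.ncard_coe_finset, hv_def]
    have hedges : H.edgeSet = (↑(T E) : Set (Sym2 α)) := by
      ext ε
      obtain ⟨a, b, rfl⟩ := sym2_cases ε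
      rw [SimpleGraph.Subgraph.mem_edgeSet]
      simp only [hT_def, Finset.coe_filter, Set.mem_setOf_eq, Set.mem_toFinset,
        SimpleGraph.mem_edgeSet]
      exact Iff.rfl
    have hedge_ncard : H.edgeSet.ncard = (T E).card := by
      rw [hedges, Set.ncard_coe_finset]
    have hne : H ≠ ⊤ := by
      intro htop
      have hsub : E₀ ⊆ E := by
        intro x hx
        obtain ⟨ε, hε, hmap⟩ := copy_edge_structure hφ₀ hx
        obtain ⟨a, b, rfl⟩ := sym2_cases ε
        have hadj : H.Adj a b := by
          rw [htop]
          exact SimpleGraph.Subgraph.top_adj.mpr (F.mem_edgeSet.mp hε)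
        rw [← hmap]
        exact hadj.2
      have : E₀ = E := Finset.eq_of_subset_of_card_le hsub (by
        rw [hE₀card, hcardE E hE])
      exact hE₀F (this ▸ hSsub hE)
    have := bal_int hbal H hne (by rw [hverts_ncard]; exact hv2 E hE)
    rwa [hverts_ncard, hedge_ncard] at this
  -- sum of shared edges
  have hTsum : f ≤ ∑ E ∈ 𝒮, (T E).card := by
    have hsub : F.edgeSet.toFinset ⊆ 𝒮.biUnion T := by
      intro ε hε
      have hεe : ε ∈ F.edgeSet := Set.mem_toFinset.mp hε
      refine Finset.mem_biUnion.mpr ⟨g (Sym2.map ⇑φ₀ ε), hgS ε hεe, ?_⟩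
      rw [hT_def]
      exact Finset.mem_filter.mpr ⟨hε, (hg _ (hmapE₀ ε hεe)).2⟩
    calc f = F.edgeSet.toFinset.card := hf_finset
    _ ≤ (𝒮.biUnion T).card := Finset.card_le_card hsub
    _ ≤ ∑ E ∈ 𝒮, (T E).card := Finset.card_biUnion_le
  -- ConfigConnected
  have hconn : ConfigConnected 𝒮 := by
    intro u hu x hx
    set R : V → V → Prop := fun y z => ∃ E ∈ 𝒮, y ∈ vertsOf E ∧ z ∈ vertsOf E with hR_def
    have hstep : ∀ a b : α, F.Adj a b → R (φ₀ a) (φ₀ b) := by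
      intro a b hadj
      have hε : s(a, b) ∈ F.edgeSet := F.mem_edgeSet.mpr hadj
      refine ⟨g (Sym2.map ⇑φ₀ s(a, b)), hgS _ hε, ?_, ?_⟩
      · have := hεw _ hε a (Sym2.mem_mk_left a b)
        rw [hw_def] at this
        exact (Finset.mem_filter.mp this).2
      · have := hεw _ hε b (Sym2.mem_mk_right a b)
        rw [hw_def] at this
        exact (Finset.mem_filter.mp this).2
    have hwalk : ∀ (a b : α), F.Walk a b → Relation.ReflTransGen R (φ₀ a) (φ₀ b) := by
      intro a b p
      induction p with
      | nil => exact Relation.ReflTransGen.refl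
      | cons h p ih => exact Relation.ReflTransGen.head (hstep _ _ h) ih
    have hRTG : ∀ a b : α, Relation.ReflTransGen R (φ₀ a) (φ₀ b) := by
      intro a b
      obtain ⟨p⟩ := preconn h3 a b
      exact hwalk a b p
    obtain ⟨Eu, hEu, huEu⟩ := Finset.mem_sup.mp hu
    obtain ⟨Ex, hEx, hxEx⟩ := Finset.mem_sup.mp hx
    obtain ⟨eu, heu, rfl⟩ := Finset.mem_image.mp hEu
    obtain ⟨ex, hex, rfl⟩ := Finset.mem_image.mp hEx
    obtain ⟨εu, hεu, hmapu⟩ := copy_edge_structure hφ₀ heu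
    obtain ⟨εx, hεx, hmapx⟩ := copy_edge_structure hφ₀ hex
    obtain ⟨a, b, rfl⟩ := sym2_cases εu
    obtain ⟨c, d, rfl⟩ := sym2_cases εx
    have hau : φ₀ a ∈ vertsOf (g eu) := by
      have := hεw _ hεu a (Sym2.mem_mk_left a b)
      rw [hmapu] at this
      rw [hw_def] at this
      exact (Finset.mem_filter.mp this).2
    have hcx : φ₀ c ∈ vertsOf (g ex) := by
      have := hεw _ hεx c (Sym2.mem_mk_left c d)
      rw [hmapx] at this
      rw [hw_def] at this
      exact (Finset.mem_filter.mp this).2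
    have h1 : R u (φ₀ a) := ⟨g eu, hEu, huEu, hau⟩
    have h2 : R (φ₀ c) x := ⟨g ex, hEx, hcx, hxEx⟩
    exact Relation.ReflTransGen.head h1 ((hRTG a c).trans (Relation.ReflTransGen.single h2))
  -- the nullity bound from no-avoidable-configurations
  have hν : ((r : ℤ) - 1) * m + 1 - ((𝒮.sup vertsOf).card : ℤ) ≤ 1 := by
    by_contra h
    push_neg at h
    refine hav ⟨𝒮, hSsub, hSne, hconn, ?_, ?_⟩
    swap
    · show (2:ℤ) ≤ ((r : ℤ) - 1) * (m : ℤ) + 1 - ((𝒮.sup vertsOf).card : ℤ)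
      linarith
    calc m ≤ f := hmf
    _ ≤ r.choose 2 := by
      rw [hf_finset]
      have : F.edgeSet.toFinset = F.edgeFinset := rfl
      rw [this]
      exact SimpleGraph.card_edgeFinset_le_card_choose_two
    _ ≤ 2 * r.choose 2 := by omega
  have hνN : (r - 1) * m ≤ (𝒮.sup vertsOf).card := by
    have h1 : ((r:ℤ) - 1) * m ≤ ((𝒮.sup vertsOf).card : ℤ) := by linarith
    have h2 : (((r - 1) * m : ℕ) : ℤ) ≤ ((𝒮.sup vertsOf).card : ℤ) := by
      push_cast [Nat.cast_sub (by omega : 1 ≤ r)]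
      convert h1 using 2
    exact_mod_cast h2
  -- vertex counting
  have hinter : ∀ E ∈ 𝒮, (vertsOf E ∩ V₀).card = v E := by
    intro E hE
    have himg : vertsOf E ∩ V₀ = (w E).image (fun a => φ₀ a) := by
      ext x
      constructor
      · intro hx
        obtain ⟨h1, h2⟩ := Finset.mem_inter.mp hx
        rw [hV₀img] at h2
        obtain ⟨a, -, rfl⟩ := Finset.mem_image.mp h2
        refine Finset.mem_image.mpr ⟨a, ?_, rfl⟩
        rw [hw_def]
        exact Finset.mem_filter.mpr ⟨Finset.mem_univ a, h1⟩
      · intro hx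
        obtain ⟨a, ha, rfl⟩ := Finset.mem_image.mp hx
        rw [hw_def] at ha
        refine Finset.mem_inter.mpr ⟨(Finset.mem_filter.mp ha).2, ?_⟩
        rw [hV₀img]
        exact Finset.mem_image.mpr ⟨a, Finset.mem_univ a, rfl⟩
    rw [himg, Finset.card_image_of_injective _ φ₀.injective, hv_def]
  have hUcard : (𝒮.sup vertsOf).card + ∑ E ∈ 𝒮, v E ≤ r + m * r := by
    have hsub : 𝒮.sup vertsOf ⊆ V₀ ∪ 𝒮.biUnion (fun E => vertsOf E \ V₀) := by
      intro x hx
      obtain ⟨E, hE, hxE⟩ := Finset.mem_sup.mp hx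
      by_cases hxV : x ∈ V₀
      · exact Finset.mem_union_left _ hxV
      · exact Finset.mem_union_right _
          (Finset.mem_biUnion.mpr ⟨E, hE, Finset.mem_sdiff.mpr ⟨hxE, hxV⟩⟩)
    have h1 : (𝒮.sup vertsOf).card ≤ r + ∑ E ∈ 𝒮, (vertsOf E \ V₀).card := by
      calc (𝒮.sup vertsOf).card ≤ (V₀ ∪ 𝒮.biUnion (fun E => vertsOf E \ V₀)).card :=
        Finset.card_le_card hsub
      _ ≤ V₀.card + (𝒮.biUnion (fun E => vertsOf E \ V₀)).card := Finset.card_union_le _ _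
      _ ≤ r + ∑ E ∈ 𝒮, (vertsOf E \ V₀).card := by
        rw [hV₀card]
        exact Nat.add_le_add_left Finset.card_biUnion_le r
    have h2 : ∑ E ∈ 𝒮, (vertsOf E \ V₀).card + ∑ E ∈ 𝒮, v E = m * r := by
      rw [← Finset.sum_add_distrib]
      have : ∀ E ∈ 𝒮, (vertsOf E \ V₀).card + v E = r := by
        intro E hE
        rw [← hinter E hE, Finset.card_sdiff_add_card_inter, hvertscard E hE]
      rw [Finset.sum_congr rfl this, Finset.sum_const, hm_def, smul_eq_mul]
    omega
  have hSumv : ∑ E ∈ 𝒮, v E ≤ r + m := by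
    have hrm : (r - 1) * m + m = m * r := by
      have h1 : ((r - 1) + 1) * m = (r - 1) * m + m := Nat.succ_mul _ _
      have h2 : (r - 1) + 1 = r := by omega
      rw [h2] at h1
      rw [← h1, Nat.mul_comm]
    have := hνN
    omega
  -- sum balance
  have hKsum : (∑ E ∈ 𝒮, (T E).card) * (r - 1) + m ≤ f * (∑ E ∈ 𝒮, (v E - 1)) := by
    have h1 : ∑ E ∈ 𝒮, ((T E).card * (r - 1) + 1) ≤ ∑ E ∈ 𝒮, f * (v E - 1) :=
      Finset.sum_le_sum hbalE
    rw [Finset.sum_add_distrib, Finset.sum_const, smul_eq_mul, mul_one, ← Finset.sum_mul,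
      ← Finset.mul_sum, ← hm_def] at h1
    exact h1
  have hKS : (∑ E ∈ 𝒮, (v E - 1)) + m = ∑ E ∈ 𝒮, v E := by
    have h1 : ∑ E ∈ 𝒮, (v E - 1 + 1) = ∑ E ∈ 𝒮, v E := by
      apply Finset.sum_congr rfl
      intro E hE
      have := hv2 E hE
      omega
    rw [Finset.sum_add_distrib, Finset.sum_const, smul_eq_mul, mul_one, ← hm_def] at h1
    exact h1
  -- case m = 1
  by_cases hm_one : m = 1
  · obtain ⟨E, hEeq⟩ := Finset.card_eq_one.mp hm_one
    have hTE : f ≤ (T E).card := by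
      have := hTsum
      rw [hEeq, Finset.sum_singleton] at this
      exact this
    have hTfull : T E = F.edgeSet.toFinset := by
      apply Finset.eq_of_subset_of_card_le
      · rw [hT_def]; exact Finset.filter_subset _ _
      · rw [← hf_finset]; exact hTE
    have hES : E ∈ 𝒮 := by rw [hEeq]; exact Finset.mem_singleton_self E
    have hsub : E₀ ⊆ E := by
      intro x hx
      obtain ⟨ε, hε, hmap⟩ := copy_edge_structure hφ₀ hx
      have : ε ∈ T E := hTfull ▸ Set.mem_toFinset.mpr hε
      rw [hT_def] at this
      rw [← hmap]
      exact (Finset.mem_filter.mp this).2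
    have : E₀ = E := Finset.eq_of_subset_of_card_le hsub (by rw [hE₀card, hcardE E hES])
    exact hE₀F (this ▸ hSsub hES)
  have hm2 : 2 ≤ m := by omega
  -- K = r
  have hK_le : (∑ E ∈ 𝒮, (v E - 1)) ≤ r := by omega
  have hK_eq : (∑ E ∈ 𝒮, (v E - 1)) = r := by
    by_contra hne
    have hKlt : (∑ E ∈ 𝒮, (v E - 1)) ≤ r - 1 := by omega
    have h1 : f * (∑ E ∈ 𝒮, (v E - 1)) ≤ f * (r - 1) := Nat.mul_le_mul_left f hKlt
    have h2 : f * (r - 1) ≤ (∑ E ∈ 𝒮, (T E).card) * (r - 1) :=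
      Nat.mul_le_mul_right _ hTsum
    omega
  have hSv_eq : ∑ E ∈ 𝒮, v E = r + m := by omega
  -- degrees
  set deg : α → ℕ := fun a => (𝒮.filter (fun E => a ∈ w E)).card with hdeg_def
  have hdeg_pos : ∀ a : α, 1 ≤ deg a := by
    intro a
    obtain ⟨b, hb⟩ := hdegF a
    have hε : s(a, b) ∈ F.edgeSet := F.mem_edgeSet.mpr hb
    refine Finset.card_pos.mpr ⟨g (Sym2.map ⇑φ₀ s(a, b)), ?_⟩
    exact Finset.mem_filter.mpr ⟨hgS _ hε, hεw _ hε a (Sym2.mem_mk_left a b)⟩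
  have hSdeg : ∑ a : α, deg a = r + m := by
    have := card_filter_comm 𝒮 Finset.univ (fun E a => a ∈ w E)
    rw [hdeg_def]
    rw [← this]
    have h1 : ∀ E ∈ 𝒮, (Finset.univ.filter (fun a => a ∈ w E)).card = v E := by
      intro E _
      rw [Finset.filter_univ_mem, hv_def]
    rw [Finset.sum_congr rfl h1, hSv_eq]
  have hSdegm1 : ∑ a : α, (deg a - 1) = m := by
    have h1 : ∑ a : α, (deg a - 1 + 1) = ∑ a : α, deg a := by
      apply Finset.sum_congr rfl
      intro a _
      have := hdeg_pos a
      omega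
    rw [Finset.sum_add_distrib, Finset.sum_const, Finset.card_univ, smul_eq_mul,
      mul_one] at h1
    rw [hSdeg] at h1
    omega
  -- the two main cases
  by_cases hAcase : ∃ Estar ∈ 𝒮, w Estar = Finset.univ
  · -- CASE A: one copy covers all vertices of E₀; rigidity argument
    obtain ⟨Estar, hEstarS, hwEstar⟩ := hAcase
    have hvEstar : v Estar = r := by
      show (w Estar).card = r
      rw [hwEstar, Finset.card_univ]
    have herase_sum : ∑ E ∈ 𝒮.erase Estar, v E = m := by
      have h1 : v Estar + ∑ E ∈ 𝒮.erase Estar, v E = ∑ E ∈ 𝒮, v E :=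
        Finset.add_sum_erase 𝒮 (fun E => v E) hEstarS
      rw [hSv_eq, hvEstar] at h1
      omega
    have h2erase : 2 * (m - 1) ≤ ∑ E ∈ 𝒮.erase Estar, v E := by
      have h1 : ∑ E ∈ 𝒮.erase Estar, 2 ≤ ∑ E ∈ 𝒮.erase Estar, v E :=
        Finset.sum_le_sum (fun E hE => hv2 E (Finset.mem_of_mem_erase hE))
      rw [Finset.sum_const, smul_eq_mul, Finset.card_erase_of_mem hEstarS] at h1
      omega
    have hm_eq2 : m = 2 := by omega
    have herase_card1 : (𝒮.erase Estar).card = 1 := by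
      rw [Finset.card_erase_of_mem hEstarS]; omega
    obtain ⟨E₂, hE₂⟩ := Finset.card_eq_one.mp herase_card1
    have hE₂mem : E₂ ∈ 𝒮.erase Estar := by rw [hE₂]; exact Finset.mem_singleton_self _
    have hE₂S : E₂ ∈ 𝒮 := Finset.mem_of_mem_erase hE₂mem
    have hvE₂ : v E₂ = 2 := by
      have h1 : ∑ E ∈ 𝒮.erase Estar, v E = v E₂ := by rw [hE₂, Finset.sum_singleton]
      have := hv2 E₂ hE₂S
      omega
    have hTsplit : (T Estar).card + (T E₂).card = ∑ E ∈ 𝒮, (T E).card := by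
      have h1 : (T Estar).card + ∑ E ∈ 𝒮.erase Estar, (T E).card = ∑ E ∈ 𝒮, (T E).card :=
        Finset.add_sum_erase 𝒮 (fun E => (T E).card) hEstarS
      rw [hE₂, Finset.sum_singleton] at h1
      exact h1
    have hwE₂2 : (w E₂).card = 2 := hvE₂
    obtain ⟨x, y, hxy, hwE₂eq⟩ := Finset.card_eq_two.mp hwE₂2
    have hTE₂le : (T E₂).card ≤ 1 := by
      apply Finset.card_le_one.mpr
      have hpair : ∀ ε ∈ T E₂, ε = s(x, y) := by
        intro ε hε
        apply sym2_eq_pair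
        · have hεmem : ε ∈ F.edgeSet := by
            rw [hT_def] at hε
            exact Set.mem_toFinset.mp (Finset.mem_filter.mp hε).1
          exact F.not_isDiag_of_mem_edgeSet hεmem
        · intro a ha
          have := hTw E₂ ε hε a ha
          rw [hwE₂eq] at this
          simpa using this
      intro ε₁ h₁ ε₂ h₂
      rw [hpair ε₁ h₁, hpair ε₂ h₂]
    have hTEstar_lt : (T Estar).card ≤ f - 1 := by
      have hb := hbalE Estar hEstarS
      rw [hvEstar] at hb
      have h1 : (T Estar).card * (r - 1) < f * (r - 1) := by omega
      have h2 : (T Estar).card < f := by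
        by_contra hge
        push_neg at hge
        have := Nat.mul_le_mul_right (r - 1) hge
        omega
      omega
    have hTEstar_eq : (T Estar).card = f - 1 := by
      have h1 : f ≤ (T Estar).card + (T E₂).card := by rw [hTsplit]; exact hTsum
      omega
    obtain ⟨φ₁, hφ₁⟩ := hcopyE Estar hEstarS
    have hvertsEstar : vertsOf Estar = V₀ := by
      have hsub : V₀ ⊆ vertsOf Estar := by
        intro z hz
        rw [hV₀img] at hz
        obtain ⟨a, -, rfl⟩ := Finset.mem_image.mp hz
        have haw : a ∈ w Estar := by rw [hwEstar]; exact Finset.mem_univ a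
        rw [hw_def] at haw
        exact (Finset.mem_filter.mp haw).2
      exact (Finset.eq_of_subset_of_card_le hsub
        (by rw [hvertscard Estar hEstarS, hV₀card])).symm
    have hinterEq : E₀ ∩ Estar = (T Estar).image (Sym2.map ⇑φ₀) := by
      ext z
      constructor
      · intro hz
        obtain ⟨hz0, hzs⟩ := Finset.mem_inter.mp hz
        obtain ⟨ε, hε, hmap⟩ := copy_edge_structure hφ₀ hz0
        refine Finset.mem_image.mpr ⟨ε, ?_, hmap⟩
        rw [hT_def]
        exact Finset.mem_filter.mpr ⟨Set.mem_toFinset.mpr hε, by rw [hmap]; exact hzs⟩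
      · intro hz
        obtain ⟨ε, hε, rfl⟩ := Finset.mem_image.mp hz
        rw [hT_def] at hε
        obtain ⟨h1, h2⟩ := Finset.mem_filter.mp hε
        exact Finset.mem_inter.mpr ⟨hmapE₀ ε (Set.mem_toFinset.mp h1), h2⟩
    have hintercard : (E₀ ∩ Estar).card = f - 1 := by
      rw [hinterEq,
        Finset.card_image_of_injective _ (Sym2.map.injective φ₀.injective), hTEstar_eq]
    have hdiffcard : (E₀ \ Estar).card = 1 := by
      have h1 := Finset.card_inter_add_card_sdiff E₀ Estar
      omega
    obtain ⟨d, hd⟩ := Finset.card_eq_one.mp hdiffcard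
    have hdmem : d ∈ E₀ ∧ d ∉ Estar := by
      have hh : d ∈ E₀ \ Estar := by rw [hd]; exact Finset.mem_singleton_self d
      exact ⟨(Finset.mem_sdiff.mp hh).1, (Finset.mem_sdiff.mp hh).2⟩
    have hdiffcard2 : (Estar \ E₀).card = 1 := by
      have h1 := Finset.card_inter_add_card_sdiff Estar E₀
      rw [Finset.inter_comm] at h1
      have h2 := hcardE Estar hEstarS
      omega
    obtain ⟨ebar, hebar⟩ := Finset.card_eq_one.mp hdiffcard2
    have hebarmem : ebar ∈ Estar ∧ ebar ∉ E₀ := by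
      have hh : ebar ∈ Estar \ E₀ := by rw [hebar]; exact Finset.mem_singleton_self _
      exact ⟨(Finset.mem_sdiff.mp hh).1, (Finset.mem_sdiff.mp hh).2⟩
    obtain ⟨ε', hε'edge, hε'map⟩ := copy_edge_structure hφ₀ hdmem.1
    have hebarV₀ : ∀ z ∈ ebar, z ∈ V₀ := fun z hz =>
      hvertsEstar ▸ copy_endpoint hebarmem.1 hz
    obtain ⟨εbar, hεbarmap⟩ : ∃ εb : Sym2 α, Sym2.map ⇑φ₀ εb = ebar := by
      obtain ⟨z1, z2, hz⟩ := sym2_cases ebar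
      have h1 := hebarV₀ z1 (hz ▸ Sym2.mem_mk_left _ _)
      have h2 := hebarV₀ z2 (hz ▸ Sym2.mem_mk_right _ _)
      rw [hV₀img] at h1 h2
      obtain ⟨a, -, ha⟩ := Finset.mem_image.mp h1
      obtain ⟨b, -, hb⟩ := Finset.mem_image.mp h2
      refine ⟨s(a, b), ?_⟩
      rw [Sym2.map_pair_eq, ha, hb, hz]
    have hebar_nd : ¬ ebar.IsDiag := copy_nondiag hφ₁ hebarmem.1
    have hεbar_nd : ¬ εbar.IsDiag := fun h => hebar_nd (hεbarmap ▸ h.map)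
    have hεbar_ne : εbar ∉ F.edgeSet := fun h => hebarmem.2 (hεbarmap ▸ hmapE₀ εbar h)
    have hε'ne : ε' ≠ εbar := fun h => hεbar_ne (h ▸ hε'edge)
    have hmap_inj : Function.Injective (Sym2.map ⇑φ₀) := Sym2.map.injective φ₀.injective
    have hEstar_iff : ∀ z : Sym2 V, z ∈ Estar ↔ (z ∈ E₀ ∧ z ≠ d) ∨ z = ebar := by
      intro z
      constructor
      · intro hz
        by_cases hz0 : z ∈ E₀
        · exact Or.inl ⟨hz0, fun h => hdmem.2 (h ▸ hz)⟩
        · refine Or.inr ?_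
          have hh : z ∈ Estar \ E₀ := Finset.mem_sdiff.mpr ⟨hz, hz0⟩
          rw [hebar] at hh
          simpa using hh
      · rintro (⟨hz0, hzd⟩ | rfl)
        · by_contra hzE
          have hh : z ∈ E₀ \ Estar := Finset.mem_sdiff.mpr ⟨hz0, hzE⟩
          rw [hd] at hh
          exact hzd (by simpa using hh)
        · exact hebarmem.1
    have hmemE₀_iff : ∀ ε : Sym2 α, Sym2.map ⇑φ₀ ε ∈ E₀ ↔ ε ∈ F.edgeSet := by
      intro ε
      constructor
      · intro h
        obtain ⟨ε₂, h1, h2⟩ := copy_edge_structure hφ₀ h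
        rwa [← hmap_inj h2]
      · exact hmapE₀ ε
    have hkey : ∀ ε : Sym2 α,
        ε ∈ (insert εbar F.edgeSet \ {ε'} : Set (Sym2 α)) ↔ Sym2.map ⇑φ₀ ε ∈ Estar := by
      intro ε
      rw [Set.mem_diff, Set.mem_insert_iff, Set.mem_singleton_iff, hEstar_iff]
      constructor
      · rintro ⟨hin | hin, hne⟩
        · subst hin
          exact Or.inr hεbarmap
        · refine Or.inl ⟨hmapE₀ ε hin, ?_⟩
          intro h
          exact hne (hmap_inj (h.trans hε'map.symm))
      · rintro (⟨h1, h2⟩ | h1)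
        · refine ⟨Or.inr ((hmemE₀_iff ε).mp h1), ?_⟩
          rintro rfl
          exact h2 hε'map
        · have hεεb : ε = εbar := hmap_inj (h1.trans hεbarmap.symm)
          subst hεεb
          exact ⟨Or.inl rfl, fun h => hε'ne h.symm⟩
    have hφ₁V₀ : ∀ a : α, φ₁ a ∈ V₀ := by
      intro a
      rw [← hvertsEstar, copy_verts hdegF hφ₁]
      exact Finset.mem_image.mpr ⟨a, Finset.mem_univ a, rfl⟩
    set χ : α → α := fun a => Function.invFun (fun c => φ₀ c) (φ₁ a) with hχ_def
    have hχspec : ∀ a, φ₀ (χ a) = φ₁ a := by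
      intro a
      have hh := hφ₁V₀ a
      rw [hV₀img] at hh
      obtain ⟨c, -, hc⟩ := Finset.mem_image.mp hh
      exact Function.invFun_eq ⟨c, hc⟩
    have hχinj : Function.Injective χ := by
      intro a b h
      apply φ₁.injective
      rw [← hχspec a, ← hχspec b, h]
    have hχbij : Function.Bijective χ := Finite.injective_iff_bijective.mp hχinj
    have hmemEstar_iff : ∀ ε : Sym2 α, Sym2.map ⇑φ₁ ε ∈ Estar ↔ ε ∈ F.edgeSet := by
      intro ε
      constructor
      · intro h
        obtain ⟨ε₂, h1, h2⟩ := copy_edge_structure hφ₁ h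
        rwa [← Sym2.map.injective φ₁.injective h2]
      · exact fun h => copy_mem_of_edge hφ₁ h
    have hadj_iff : ∀ a b : α,
        (SimpleGraph.fromEdgeSet (insert εbar F.edgeSet \ {ε'})).Adj (χ a) (χ b) ↔
          F.Adj a b := by
      intro a b
      rw [SimpleGraph.fromEdgeSet_adj]
      constructor
      · rintro ⟨h1, h2⟩
        have hh := (hkey s(χ a, χ b)).mp h1
        rw [Sym2.map_pair_eq, hχspec, hχspec, ← Sym2.map_pair_eq] at hh
        exact F.mem_edgeSet.mp ((hmemEstar_iff s(a, b)).mp hh)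
      · intro hadj
        refine ⟨?_, fun h => hadj.ne (hχinj h)⟩
        apply (hkey s(χ a, χ b)).mpr
        rw [Sym2.map_pair_eq, hχspec, hχspec, ← Sym2.map_pair_eq]
        exact (hmemEstar_iff s(a, b)).mpr (F.mem_edgeSet.mpr hadj)
    have hiso : Nonempty
        ((SimpleGraph.fromEdgeSet (insert εbar F.edgeSet \ {ε'})) ≃g F) := by
      refine ⟨SimpleGraph.Iso.symm ⟨Equiv.ofBijective χ hχbij, ?_⟩⟩
      intro a b
      exact hadj_iff a b
    exact hrig εbar hεbar_nd hεbar_ne ε' (Set.mem_insert_of_mem _ hε'edge) hε'ne hiso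
  · -- CASE B: all traces proper; separator argument
    push_neg at hAcase
    set P : Finset (Sym2 V) → Finset α :=
      (fun E => (w E).filter (fun a => ¬ 2 ≤ deg a)) with hP_def
    set B : Finset (Sym2 V) → Finset α :=
      (fun E => (w E).filter (fun a => 2 ≤ deg a)) with hB_def
    have hPsubw : ∀ E, P E ⊆ w E := fun E => Finset.filter_subset _ _
    have hWP : ∀ E, w E \ P E = B E := by
      intro E
      ext a
      simp only [hP_def, hB_def, Finset.mem_sdiff, Finset.mem_filter]
      tauto
    have hprivclosed : ∀ E ∈ 𝒮, ∀ a ∈ P E, ∀ b, F.Adj a b → b ∈ w E := by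
      intro E hE a ha b hadj
      simp only [hP_def, Finset.mem_filter] at ha
      obtain ⟨haw, hadeg⟩ := ha
      have hε : s(a, b) ∈ F.edgeSet := F.mem_edgeSet.mpr hadj
      have hE' := hgS _ hε
      have haw' := hεw _ hε a (Sym2.mem_mk_left a b)
      have hbw' := hεw _ hε b (Sym2.mem_mk_right a b)
      have hcard1 : (𝒮.filter (fun E' => a ∈ w E')).card ≤ 1 := by
        have : deg a = (𝒮.filter (fun E' => a ∈ w E')).card := rfl
        omega
      have hEeq : E = g (Sym2.map ⇑φ₀ s(a, b)) :=
        Finset.card_le_one.mp hcard1 _ (Finset.mem_filter.mpr ⟨hE, haw⟩) _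
          (Finset.mem_filter.mpr ⟨hE', haw'⟩)
      rw [hEeq]
      exact hbw'
    have hB3 : ∀ E ∈ 𝒮, (P E).Nonempty → 3 ≤ (B E).card := by
      intro E hE hPne
      by_contra hlt
      push_neg at hlt
      refine sep_lemma h3 (w E) (P E) (hPsubw E) (hAcase E hE) (hv2 E hE) hPne
        (hprivclosed E hE) ?_
      rw [hWP]
      omega
    have hB2 : ∀ E ∈ 𝒮, 2 ≤ (B E).card := by
      intro E hE
      by_cases hPne : (P E).Nonempty
      · have := hB3 E hE hPne
        omega
      · have hPempty : P E = ∅ := Finset.not_nonempty_iff_eq_empty.mp hPne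
        have hBW : B E = w E := by rw [← hWP, hPempty, Finset.sdiff_empty]
        rw [hBW]
        exact hv2 E hE
    set t : Finset α := Finset.univ.filter (fun a => 2 ≤ deg a) with ht_def
    have hBt : ∀ E ∈ 𝒮, B E = t.filter (fun a => a ∈ w E) := by
      intro E _
      ext a
      simp only [hB_def, ht_def, Finset.mem_filter, Finset.mem_univ, true_and]
      tauto
    have hsumB : ∑ E ∈ 𝒮, (B E).card = ∑ a ∈ t, deg a := by
      rw [Finset.sum_congr rfl (fun E hE => by rw [hBt E hE])]
      rw [card_filter_comm 𝒮 t (fun E a => a ∈ w E)]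
    have ht_le : t.card ≤ m := by
      have h1 : ∑ a ∈ t, 1 ≤ ∑ a ∈ t, (deg a - 1) :=
        Finset.sum_le_sum (fun a ha => by
          have := (Finset.mem_filter.mp ha).2
          omega)
      have h2 : ∑ a ∈ t, (deg a - 1) ≤ ∑ a : α, (deg a - 1) :=
        Finset.sum_le_sum_of_subset (Finset.subset_univ t)
      rw [Finset.sum_const, smul_eq_mul, mul_one] at h1
      omega
    have hsumB_le : ∑ a ∈ t, deg a ≤ t.card + m := by
      have h1 : ∑ a ∈ t, deg a = ∑ a ∈ t, (deg a - 1 + 1) :=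
        Finset.sum_congr rfl (fun a _ => by have := hdeg_pos a; omega)
      have h2 : ∑ a ∈ t, (deg a - 1) ≤ ∑ a : α, (deg a - 1) :=
        Finset.sum_le_sum_of_subset (Finset.subset_univ t)
      rw [Finset.sum_add_distrib, Finset.sum_const, smul_eq_mul, mul_one] at h1
      omega
    by_cases hBcase : ∃ Estar ∈ 𝒮, (P Estar).Nonempty
    · obtain ⟨Estar, hEstarS, hPne⟩ := hBcase
      have h3B := hB3 Estar hEstarS hPne
      have hsplit : (B Estar).card + ∑ E ∈ 𝒮.erase Estar, (B E).card
          = ∑ E ∈ 𝒮, (B E).card :=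
        Finset.add_sum_erase 𝒮 (fun E => (B E).card) hEstarS
      have herase2 : 2 * (m - 1) ≤ ∑ E ∈ 𝒮.erase Estar, (B E).card := by
        have h1 : ∑ E ∈ 𝒮.erase Estar, 2 ≤ ∑ E ∈ 𝒮.erase Estar, (B E).card :=
          Finset.sum_le_sum (fun E hE => hB2 E (Finset.mem_of_mem_erase hE))
        rw [Finset.sum_const, smul_eq_mul, Finset.card_erase_of_mem hEstarS] at h1
        omega
      omega
    · push_neg at hBcase
      have hdeg2 : ∀ a : α, 2 ≤ deg a := by
        intro a
        have h1 := hdeg_pos a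
        have hne : (𝒮.filter (fun E => a ∈ w E)).Nonempty := by
          apply Finset.card_pos.mp
          have : deg a = (𝒮.filter (fun E => a ∈ w E)).card := rfl
          omega
        obtain ⟨E, hE⟩ := hne
        obtain ⟨hES, haw⟩ := Finset.mem_filter.mp hE
        by_contra hlt
        have : (P E).Nonempty := ⟨a, by
          simp only [hP_def, Finset.mem_filter]
          exact ⟨haw, hlt⟩⟩
        exact Finset.nonempty_iff_ne_empty.mp this (hBcase E hES)
      have hmr : r ≤ m := by
        have h1 : ∑ a : α, 1 ≤ ∑ a : α, (deg a - 1) :=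
          Finset.sum_le_sum (fun a _ => by have := hdeg2 a; omega)
        rw [Finset.sum_const, smul_eq_mul, mul_one, Finset.card_univ] at h1
        omega
      have h2m : 2 * m ≤ ∑ E ∈ 𝒮, v E := by
        have h1 : ∑ E ∈ 𝒮, 2 ≤ ∑ E ∈ 𝒮, v E := Finset.sum_le_sum hv2
        rw [Finset.sum_const, smul_eq_mul, ← hm_def] at h1
        omega
      have hm_r : m = r := by omega
      have hvall2 : ∀ E ∈ 𝒮, v E = 2 := by
        intro E hE
        by_contra hne
        have h3le : 3 ≤ v E := by
          have := hv2 E hE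
          omega
        have hsplit : v E + ∑ E' ∈ 𝒮.erase E, v E' = ∑ E' ∈ 𝒮, v E' :=
          Finset.add_sum_erase 𝒮 (fun E => v E) hE
        have herase2 : 2 * (m - 1) ≤ ∑ E' ∈ 𝒮.erase E, v E' := by
          have h1 : ∑ E' ∈ 𝒮.erase E, 2 ≤ ∑ E' ∈ 𝒮.erase E, v E' :=
            Finset.sum_le_sum (fun E' hE' => hv2 E' (Finset.mem_of_mem_erase hE'))
          rw [Finset.sum_const, smul_eq_mul, Finset.card_erase_of_mem hE] at h1
          omega
        omega
      have hTall : ∀ E ∈ 𝒮, (T E).card ≤ 1 := by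
        intro E hE
        have hwE2 : (w E).card = 2 := hvall2 E hE
        obtain ⟨x, y, hxy, hwEeq⟩ := Finset.card_eq_two.mp hwE2
        apply Finset.card_le_one.mpr
        have hpair : ∀ ε ∈ T E, ε = s(x, y) := by
          intro ε hε
          apply sym2_eq_pair
          · have hεmem : ε ∈ F.edgeSet := by
              rw [hT_def] at hε
              exact Set.mem_toFinset.mp (Finset.mem_filter.mp hε).1
            exact F.not_isDiag_of_mem_edgeSet hεmem
          · intro a ha
            have := hTw E ε hε a ha
            rw [hwEeq] at this
            simpa using this
        intro ε₁ h₁ ε₂ h₂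
        rw [hpair ε₁ h₁, hpair ε₂ h₂]
      have hfm : f ≤ m := by
        have h1 : ∑ E ∈ 𝒮, (T E).card ≤ ∑ E ∈ 𝒮, 1 := Finset.sum_le_sum hTall
        rw [Finset.sum_const, smul_eq_mul, mul_one, ← hm_def] at h1
        omega
      omega
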